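/- Let k districts each have agents with positions in ℝ. For each district d, let r_d be the position of its rightmost agent, and let w be the ⌈(1 - 1/√2)k⌉-th smallest of the values r_d. Then for every o ∈ ℝ with o < w: ∑_d max_{i ∈ d} |x_i - w| ≤ (1 + √2) · ∑_d max_{i ∈ d} |x_i - o|. -/

import Mathlib

/-- Case `o < w` of the Sum-of-Max upper bound for the
⌈(1-1/√2)k⌉-Leftmost-of-Rightmost mechanism. -/
theorem stmt_11 {ι : Type*} [Fintype ι] (k : ℕ) (hk : 0 < k)
    (dst : ι → Fin k) (x : ι → ℝ)
    (hne : ∀ j : Fin k, (Finset.univ.filter fun i => dst i = j).Nonempty)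
    (r : Fin k → ℝ)
    (hr : ∀ j, r j = (Finset.univ.filter fun i => dst i = j).sup' (hne j) x)
    (w : ℝ)
    (hw : w = ((Finset.univ.val.map r).sort (· ≤ ·)).getD
        (⌈(1 - 1 / Real.sqrt 2) * (k : ℝ)⌉₊ - 1) 0)
    (o : ℝ) (ho : o < w) :
    ∑ j : Fin k, (Finset.univ.filter fun i => dst i = j).sup' (hne j) (fun i => |x i - w|)
      ≤ (1 + Real.sqrt 2) *
        ∑ j : Fin k, (Finset.univ.filter fun i => dst i = j).sup' (hne j)
          (fun i => |x i - o|) := by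
  have hs2 : (1:ℝ) < Real.sqrt 2 := by
    have := Real.sqrt_lt_sqrt (by norm_num : (0:ℝ) ≤ 1) (by norm_num : (1:ℝ) < 2)
    simpa using this
  have hs2pos : (0:ℝ) < Real.sqrt 2 := by linarith
  set m : ℕ := ⌈(1 - 1 / Real.sqrt 2) * (k : ℝ)⌉₊ with hm
  set s : List ℝ := (Finset.univ.val.map r).sort (· ≤ ·) with hs
  have hcoef_pos : (0:ℝ) < 1 - 1 / Real.sqrt 2 := by
    have : 1 / Real.sqrt 2 < 1 := by
      rw [div_lt_one hs2pos]; exact hs2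
    linarith
  have hcoef_le : (1:ℝ) - 1 / Real.sqrt 2 ≤ 1 := by
    have : (0:ℝ) ≤ 1 / Real.sqrt 2 := by positivity
    linarith
  have hm1 : 1 ≤ m := by
    rw [hm, Nat.one_le_ceil_iff]
    positivity
  have hmk : m ≤ k := by
    rw [hm, Nat.ceil_le]
    have hkpos : (0:ℝ) < k := by exact_mod_cast hk
    nlinarith
  have hslen : s.length = k := by
    simp [hs]
  have hidx : m - 1 < s.length := by
    rw [hslen]; omega
  have hwget : w = s.get ⟨m - 1, hidx⟩ := by
    rw [hw, List.getD_eq_getElem (hn := hidx)]; rfl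
  have hsorted : s.Pairwise (· ≤ ·) := Multiset.pairwise_sort _ _
  -- the set of districts with r j ≥ w
  set S : Finset (Fin k) := Finset.univ.filter (fun j => w ≤ r j) with hS
  have hcount : k - (m - 1) ≤ S.card := by
    have h1 : S.card = Multiset.countP (fun a => w ≤ a) (Finset.univ.val.map r) := by
      rw [Multiset.countP_map]
      rfl
    have h2 : Multiset.countP (fun a => w ≤ a) (Finset.univ.val.map r)
        = s.countP (fun a => decide (w ≤ a)) := by
      conv_lhs => rw [← Multiset.sort_eq (Finset.univ.val.map r) (· ≤ ·)]
      exact Multiset.coe_countP _ _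
    have hdroplen : (s.drop (m-1)).length = k - (m-1) := by
      rw [List.length_drop, hslen]
    have hall : ∀ a ∈ s.drop (m-1), decide (w ≤ a) = true := by
      intro a ha
      rw [List.mem_iff_get] at ha
      obtain ⟨i, hi⟩ := ha
      have hlt : m - 1 + ↑i < s.length := by
        have h1 := i.isLt
        have h2 := hdroplen
        have h3 := hslen
        omega
      have key : w ≤ (s.drop (m-1)).get i := by
        have hEq : (s.drop (m-1)).get i = s.get ⟨m-1+↑i, hlt⟩ :=
          by simp
        rw [hEq, hwget]
        exact hsorted.rel_get_of_le (by simp)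
      simp only [decide_eq_true_eq]
      rw [← hi]
      exact key
    have h3 : s.countP (fun a => decide (w ≤ a)) ≥ (s.drop (m-1)).countP (fun a => decide (w ≤ a)) :=
      (List.drop_sublist _ _).countP_le
    rw [List.countP_eq_length.mpr hall] at h3
    omega
  -- real-valued count bound : k ≤ √2 * S.card
  have hcard : (k:ℝ) ≤ Real.sqrt 2 * S.card := by
    have hc1 : ((k - (m-1) : ℕ) : ℝ) ≤ S.card := by exact_mod_cast hcount
    have hc2 : ((k - (m-1) : ℕ) : ℝ) = (k:ℝ) - ((m:ℝ) - 1) := by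
      rw [Nat.cast_sub (by omega), Nat.cast_sub hm1, Nat.cast_one]
    have hc3 : (m:ℝ) < (1 - 1 / Real.sqrt 2) * k + 1 :=
      Nat.ceil_lt_add_one (by positivity)
    have : (k:ℝ) / Real.sqrt 2 ≤ S.card := by
      have : (k:ℝ) - (1 - 1 / Real.sqrt 2) * k ≤ S.card := by linarith
      calc (k:ℝ) / Real.sqrt 2 = (k:ℝ) - (1 - 1 / Real.sqrt 2) * k := by ring
        _ ≤ S.card := this
    calc (k:ℝ) = Real.sqrt 2 * ((k:ℝ) / Real.sqrt 2) := by
          field_simp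
      _ ≤ Real.sqrt 2 * S.card := by
          exact mul_le_mul_of_nonneg_left this (le_of_lt hs2pos)
  set A : ℝ := ∑ j : Fin k, (Finset.univ.filter fun i => dst i = j).sup' (hne j)
      (fun i => |x i - o|) with hA
  -- per-district triangle inequality
  have htri : ∀ j : Fin k,
      (Finset.univ.filter fun i => dst i = j).sup' (hne j) (fun i => |x i - w|)
        ≤ (Finset.univ.filter fun i => dst i = j).sup' (hne j) (fun i => |x i - o|) + (w - o) := by
    intro j
    apply Finset.sup'_le
    intro i hi
    have h1 : |x i - w| ≤ |x i - o| + |w - o| := by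
      have := abs_sub_abs_le_abs_sub (x i - w) (x i - o)
      calc |x i - w| = |(x i - o) - (w - o)| := by ring_nf
        _ ≤ |x i - o| + |w - o| := abs_sub _ _
    have h2 : |x i - o| ≤ (Finset.univ.filter fun i => dst i = j).sup' (hne j)
        (fun i => |x i - o|) := Finset.le_sup' (fun i => |x i - o|) hi
    rw [abs_of_pos (by linarith : (0:ℝ) < w - o)] at h1
    linarith
  have hnonneg : ∀ j : Fin k, 0 ≤ (Finset.univ.filter fun i => dst i = j).sup' (hne j)
      (fun i => |x i - o|) := by
    intro j
    obtain ⟨i, hi⟩ := hne j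
    exact le_trans (abs_nonneg (x i - o)) (Finset.le_sup' (fun i => |x i - o|) hi)
  have hSbound : ∀ j ∈ S, w - o ≤ (Finset.univ.filter fun i => dst i = j).sup' (hne j)
      (fun i => |x i - o|) := by
    intro j hj
    rw [hS, Finset.mem_filter] at hj
    obtain ⟨i, hi, hix⟩ := Finset.exists_mem_eq_sup' (hne j) x
    have hrj : r j = x i := by rw [hr j, hix]
    have : w - o ≤ |x i - o| := by
      have : w ≤ x i := by rw [← hrj]; exact hj.2
      have := le_abs_self (x i - o)
      linarith
    exact le_trans this (Finset.le_sup' (fun i => |x i - o|) hi)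
  have hSA : (S.card : ℝ) * (w - o) ≤ A := by
    have h1 := Finset.card_nsmul_le_sum S _ _ hSbound
    rw [nsmul_eq_mul] at h1
    have h2 : ∑ j ∈ S, (Finset.univ.filter fun i => dst i = j).sup' (hne j)
        (fun i => |x i - o|) ≤ A := by
      rw [hA]
      apply Finset.sum_le_sum_of_subset_of_nonneg (Finset.subset_univ S)
      intro j _ _
      exact hnonneg j
    linarith
  have hsum : ∑ j : Fin k, (Finset.univ.filter fun i => dst i = j).sup' (hne j)
      (fun i => |x i - w|) ≤ A + (k:ℝ) * (w - o) := by
    calc ∑ j : Fin k, (Finset.univ.filter fun i => dst i = j).sup' (hne j)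
          (fun i => |x i - w|)
        ≤ ∑ j : Fin k, ((Finset.univ.filter fun i => dst i = j).sup' (hne j)
          (fun i => |x i - o|) + (w - o)) := Finset.sum_le_sum (fun j _ => htri j)
      _ = A + (k:ℝ) * (w - o) := by
          rw [Finset.sum_add_distrib, hA]
          simp [Finset.sum_const, mul_comm]
          ring
  have hkw : (k:ℝ) * (w - o) ≤ Real.sqrt 2 * A := by
    calc (k:ℝ) * (w - o) ≤ (Real.sqrt 2 * S.card) * (w - o) :=
          mul_le_mul_of_nonneg_right hcard (by linarith)
      _ = Real.sqrt 2 * ((S.card:ℝ) * (w - o)) := by ring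
      _ ≤ Real.sqrt 2 * A := mul_le_mul_of_nonneg_left hSA (le_of_lt hs2pos)
  calc ∑ j : Fin k, (Finset.univ.filter fun i => dst i = j).sup' (hne j)
        (fun i => |x i - w|) ≤ A + (k:ℝ) * (w - o) := hsum
    _ ≤ A + Real.sqrt 2 * A := by linarith
    _ = (1 + Real.sqrt 2) * A := by ring
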